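/- Let H be the block matrix [[D+P, 0, 0], [0, (ρ/α)B'B, ((1-α)/α)B'], [0, ((1-α)/α)B, (1/(αρ))I]] where D and P are positive semi-definite matrices, B is any real matrix, ρ > 0, and 0 < α < 2. Then H is positive semi-definite. -/

import Mathlib

open Matrix

/-- The quadratic form of the block matrix H = [[D+P,0,0],[0,(ρ/α)B'B,((1-α)/α)B'],
[0,((1-α)/α)B,(1/(αρ))I]] is nonnegative, i.e. H is positive semi-definite. -/
theorem stmt_0 {n p m : ℕ}
    (D P : Matrix (Fin n) (Fin n) ℝ) (hD : D.PosSemidef) (hP : P.PosSemidef)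
    (B : Matrix (Fin m) (Fin p) ℝ) (ρ α : ℝ) (hρ : 0 < ρ) (hα1 : 0 < α) (hα2 : α < 2)
    (x : Fin n → ℝ) (u : Fin p → ℝ) (μ : Fin m → ℝ) :
    0 ≤ x ⬝ᵥ (D + P).mulVec x
      + (ρ / α) * (B.mulVec u ⬝ᵥ B.mulVec u)
      + (2 * (1 - α) / α) * (B.mulVec u ⬝ᵥ μ)
      + (1 / (α * ρ)) * (μ ⬝ᵥ μ) := by
  set v := B.mulVec u with hv
  have hx : 0 ≤ x ⬝ᵥ (D + P).mulVec x := by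
    rw [add_mulVec, dotProduct_add]
    simpa using add_nonneg (hD.dotProduct_mulVec_nonneg x) (hP.dotProduct_mulVec_nonneg x)
  have ha : 0 ≤ v ⬝ᵥ v := by
    simpa [dotProduct] using Finset.sum_nonneg fun i _ => mul_self_nonneg (v i)
  have hb : 0 ≤ μ ⬝ᵥ μ := by
    simpa [dotProduct] using Finset.sum_nonneg fun i _ => mul_self_nonneg (μ i)
  have hcs : (v ⬝ᵥ μ) ^ 2 ≤ (v ⬝ᵥ v) * (μ ⬝ᵥ μ) := by
    have := Finset.sum_mul_sq_le_sq_mul_sq Finset.univ v μ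
    simpa [dotProduct, pow_two, mul_comm, Finset.mul_sum] using this
  set a := v ⬝ᵥ v
  set b := μ ⬝ᵥ μ
  set s := v ⬝ᵥ μ
  have h1 : (1 - α) ^ 2 ≤ 1 := by nlinarith
  have h5 : (1 - α) ^ 2 * s ^ 2 ≤ a * b := by
    calc (1 - α) ^ 2 * s ^ 2 ≤ 1 * s ^ 2 :=
          mul_le_mul_of_nonneg_right h1 (sq_nonneg s)
      _ = s ^ 2 := one_mul _
      _ ≤ a * b := hcs
  have h4 : (2 * ρ * (1 - α) * s) ^ 2 ≤ (ρ ^ 2 * a + b) ^ 2 := by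
    nlinarith [sq_nonneg (ρ ^ 2 * a - b), mul_le_mul_of_nonneg_left h5
      (by positivity : (0:ℝ) ≤ 4 * ρ ^ 2)]
  have h6 : 0 ≤ ρ ^ 2 * a + b := by positivity
  have key2 : 0 ≤ ρ ^ 2 * a + 2 * ρ * (1 - α) * s + b := by
    nlinarith [h4, h6]
  have key : 0 ≤ ρ * a + 2 * (1 - α) * s + (1 / ρ) * b := by
    have := mul_nonneg (le_of_lt (one_div_pos.2 hρ)) key2
    have heq : (1 / ρ) * (ρ ^ 2 * a + 2 * ρ * (1 - α) * s + b)
        = ρ * a + 2 * (1 - α) * s + (1 / ρ) * b := by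
      field_simp
    linarith [heq ▸ this]
  have hα1' : 0 < 1 / α := by positivity
  have : (ρ / α) * a + (2 * (1 - α) / α) * s + (1 / (α * ρ)) * b
      = (1 / α) * (ρ * a + 2 * (1 - α) * s + (1 / ρ) * b) := by
    field_simp
  linarith [mul_nonneg hα1'.le key, this ▸ (mul_nonneg hα1'.le key)]
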